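/- For every n ≥ 1, every f : {−1,1}^n → ℝ with ‖f‖_{L²(ν)} = 1, and every ε ∈ (0,1), VAR(f,ε) ≤ 7 · W(f)^{ε/4}, where W(f) = (1/4) Σ_{i=1}^n ‖D_i f‖_{L¹(ν)}². -/

import Mathlib

open Finset

/-- Expectation with respect to the uniform measure `ν` on the discrete cube `{-1,1}ⁿ`,
coordinates encoded by `Bool` (`true ↔ 1`, `false ↔ -1`). -/
noncomputable def cubeE (n : ℕ) (f : (Fin n → Bool) → ℝ) : ℝ :=
  (∑ x : Fin n → Bool, f x) / 2 ^ n

/-- Variance with respect to the uniform measure on the discrete cube. -/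
noncomputable def cubeVar (n : ℕ) (f : (Fin n → Bool) → ℝ) : ℝ :=
  cubeE n (fun x => f x ^ 2) - (cubeE n f) ^ 2

/-- `τ_i x` : flip the `i`-th coordinate. -/
def cubeFlip (n : ℕ) (i : Fin n) (x : Fin n → Bool) : Fin n → Bool :=
  Function.update x i (!(x i))

/-- Discrete derivative `D_i f (x) = f (τ_i x) - f x`. -/
noncomputable def Dop (n : ℕ) (i : Fin n) (f : (Fin n → Bool) → ℝ) (x : Fin n → Bool) : ℝ :=
  f (cubeFlip n i x) - f x

/-- Joint probability weight for one coordinate of the pair `(X, X^η)`, where `X` is uniform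
on `{-1,1}` and `X^η` equals `X` with probability `1-η` and is an independent uniform sign
with probability `η` : `P(X = a, X^η = b)` equals `(2-η)/4` if `a = b` and `η/4` otherwise. -/
noncomputable def nsW (η : ℝ) (a b : Bool) : ℝ := if a = b then (2 - η) / 4 else η / 4

/-- Noise stability `VAR(f,η) = E[f(X) f(X^η)] - (E f)²`, where `(X, X^η)` is the pair of
`(1-η)`-correlated uniform random points of the cube, with explicit joint distribution
`P(X = x, X^η = y) = ∏ᵢ nsW η xᵢ yᵢ`. -/
noncomputable def cubeNS (n : ℕ) (f : (Fin n → Bool) → ℝ) (η : ℝ) : ℝ :=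
  (∑ x : Fin n → Bool, ∑ y : Fin n → Bool, f x * f y * ∏ i, nsW η (x i) (y i)) -
    (cubeE n f) ^ 2

namespace Stmt6A

variable {n : ℕ}

def zet (b : Bool) : ℝ := if b then 1 else -1

lemma zet_mul_self (b : Bool) : zet b * zet b = 1 := by cases b <;> norm_num [zet]
lemma abs_zet (b : Bool) : |zet b| = 1 := by cases b <;> norm_num [zet]
lemma zet_not (b : Bool) : zet (!b) = - zet b := by cases b <;> norm_num [zet]
lemma zet_true_add_false : zet true + zet false = 0 := by norm_num [zet]

def chi (s x : Fin n → Bool) : ℝ := ∏ i, if s i then zet (x i) else 1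

def wt (s : Fin n → Bool) : ℕ := ∑ i, if s i then 1 else 0

lemma pow_wt (σ : ℝ) (s : Fin n → Bool) :
    σ ^ wt s = ∏ i, (if s i then σ else 1) := by
  rw [wt, ← Finset.prod_pow_eq_pow_sum]
  exact Finset.prod_congr rfl fun i _ => by by_cases h : s i <;> simp [h]

lemma sum_prod_bool (g : (i : Fin n) → Bool → ℝ) :
    ∑ x : Fin n → Bool, ∏ i, g i (x i) = ∏ i, (g i true + g i false) := by
  rw [← Fintype.prod_sum g]
  exact Finset.prod_congr rfl fun i _ => Fintype.sum_bool _

lemma prod_boolean_ite (P : Fin n → Prop) [DecidablePred P] :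
    (∏ i, if P i then (2:ℝ) else 0) = if (∀ i, P i) then (2:ℝ)^n else 0 := by
  by_cases h : ∀ i, P i
  · rw [if_pos h, Finset.prod_congr rfl (fun i _ => if_pos (h i)), Finset.prod_const,
      Finset.card_univ, Fintype.card_fin]
  · rw [if_neg h]
    push_neg at h; obtain ⟨i, hi⟩ := h
    exact Finset.prod_eq_zero (mem_univ i) (if_neg hi)

lemma sum_chi_chi (s t : Fin n → Bool) :
    ∑ x : Fin n → Bool, chi s x * chi t x = if s = t then (2:ℝ)^n else 0 := by
  calc ∑ x : Fin n → Bool, chi s x * chi t x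
      = ∑ x : Fin n → Bool,
          ∏ i, ((if s i then zet (x i) else 1) * (if t i then zet (x i) else 1)) :=
        Finset.sum_congr rfl fun x _ => by rw [chi, chi, ← Finset.prod_mul_distrib]
    _ = ∏ i, (((if s i then zet true else 1) * (if t i then zet true else 1)) +
          ((if s i then zet false else 1) * (if t i then zet false else 1))) :=
        sum_prod_bool (fun i b => (if s i then zet b else 1) * (if t i then zet b else 1))
    _ = ∏ i, (if s i = t i then (2:ℝ) else 0) :=
        Finset.prod_congr rfl fun i _ => by
          cases hs : s i <;> cases ht : t i <;> norm_num [zet]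
    _ = if (∀ i, s i = t i) then (2:ℝ)^n else 0 := prod_boolean_ite _
    _ = if s = t then (2:ℝ)^n else 0 := if_congr funext_iff.symm rfl rfl

def Kk (σ : ℝ) (x y : Fin n → Bool) : ℝ := ∏ i, (1 + σ * (zet (x i) * zet (y i)))

lemma sum_s_chi (σ : ℝ) (x y : Fin n → Bool) :
    ∑ s : Fin n → Bool, σ ^ wt s * (chi s x * chi s y) = Kk σ x y := by
  calc ∑ s : Fin n → Bool, σ ^ wt s * (chi s x * chi s y)
      = ∑ s : Fin n → Bool,
          ∏ i, (if s i then σ * (zet (x i) * zet (y i)) else 1) := by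
        refine Finset.sum_congr rfl fun s _ => ?_
        rw [pow_wt, chi, chi, ← Finset.prod_mul_distrib, ← Finset.prod_mul_distrib]
        exact Finset.prod_congr rfl fun i _ => by by_cases h : s i <;> simp [h] <;> ring
    _ = ∏ i, (σ * (zet (x i) * zet (y i)) + 1) :=
        sum_prod_bool (fun i b => if b then σ * (zet (x i) * zet (y i)) else 1)
    _ = Kk σ x y := Finset.prod_congr rfl fun i _ => by rw [add_comm]

lemma Kk_one_diag (x y : Fin n → Bool) : Kk 1 x y = if x = y then (2:ℝ)^n else 0 := by
  calc Kk 1 x y = ∏ i, (if x i = y i then (2:ℝ) else 0) :=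
      Finset.prod_congr rfl fun i _ => by cases hx : x i <;> cases hy : y i <;> norm_num [zet]
    _ = if (∀ i, x i = y i) then (2:ℝ)^n else 0 := prod_boolean_ite _
    _ = _ := if_congr funext_iff.symm rfl rfl

lemma Kk_symm (σ : ℝ) (x y : Fin n → Bool) : Kk σ x y = Kk σ y x :=
  Finset.prod_congr rfl fun i _ => by ring

lemma Kk_nonneg {σ : ℝ} (h0 : 0 ≤ σ) (h1 : σ ≤ 1) (x y : Fin n → Bool) : 0 ≤ Kk σ x y := by
  refine Finset.prod_nonneg fun i _ => ?_
  have : zet (x i) * zet (y i) = 1 ∨ zet (x i) * zet (y i) = -1 := by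
    cases hx : x i <;> cases hy : y i <;> norm_num [zet]
  rcases this with h | h <;> rw [h] <;> nlinarith

lemma Kk_row_sum (σ : ℝ) (x : Fin n → Bool) : ∑ y : Fin n → Bool, Kk σ x y = (2:ℝ)^n := by
  calc ∑ y : Fin n → Bool, Kk σ x y
      = ∑ y : Fin n → Bool, ∏ i, (1 + σ * (zet (x i) * zet (y i))) := rfl
    _ = ∏ i, ((1 + σ * (zet (x i) * zet true)) + (1 + σ * (zet (x i) * zet false))) :=
        sum_prod_bool (fun i b => 1 + σ * (zet (x i) * zet b))
    _ = ∏ i, (2:ℝ) := Finset.prod_congr rfl fun i _ => by norm_num [zet]; ring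
    _ = (2:ℝ)^n := by rw [Finset.prod_const, Finset.card_univ, Fintype.card_fin]

-- chunk 2: fc, Parseval, Top (to be appended inside namespace, before `end Stmt6A`)
section Chunk2
variable {n : ℕ}

lemma two_pow_pos : (0:ℝ) < 2^n := by positivity

noncomputable def fc (f : (Fin n → Bool) → ℝ) (s : Fin n → Bool) : ℝ :=
  (∑ x : Fin n → Bool, f x * chi s x) / 2^n

lemma cubeE_eq_fc_zero (f : (Fin n → Bool) → ℝ) : cubeE n f = fc f (fun _ => false) := by
  unfold cubeE fc
  congr 1
  exact Finset.sum_congr rfl fun x _ => by simp [chi]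

lemma sum_s_chi_chi (x y : Fin n → Bool) :
    ∑ s : Fin n → Bool, chi s x * chi s y = if x = y then (2:ℝ)^n else 0 := by
  rw [← Kk_one_diag, ← sum_s_chi 1 x y]
  exact Finset.sum_congr rfl fun s _ => by rw [one_pow, one_mul]

lemma sum_sq_raw (f : (Fin n → Bool) → ℝ) (σ : ℝ) :
    ∑ s : Fin n → Bool, σ ^ wt s * (∑ x : Fin n → Bool, f x * chi s x)^2
      = ∑ x : Fin n → Bool, ∑ y : Fin n → Bool, (f x * f y) * Kk σ x y := by
  have h1 : ∀ s : Fin n → Bool, σ ^ wt s * (∑ x : Fin n → Bool, f x * chi s x)^2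
      = ∑ x : Fin n → Bool, ∑ y : Fin n → Bool, (f x * f y) * (σ ^ wt s * (chi s x * chi s y)) := by
    intro s
    rw [sq, Finset.sum_mul_sum]
    rw [Finset.mul_sum]
    refine Finset.sum_congr rfl fun x _ => ?_
    rw [Finset.mul_sum]
    exact Finset.sum_congr rfl fun y _ => by ring
  rw [Finset.sum_congr rfl fun s _ => h1 s]
  rw [Finset.sum_comm]
  refine Finset.sum_congr rfl fun x _ => ?_
  rw [Finset.sum_comm]
  refine Finset.sum_congr rfl fun y _ => ?_
  rw [← Finset.mul_sum, sum_s_chi]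

lemma pars_weighted (f : (Fin n → Bool) → ℝ) (σ : ℝ) :
    ∑ s : Fin n → Bool, σ ^ wt s * (fc f s)^2
      = (∑ x : Fin n → Bool, ∑ y : Fin n → Bool, (f x * f y) * Kk σ x y) / (2^n)^2 := by
  rw [← sum_sq_raw, Finset.sum_div]
  refine Finset.sum_congr rfl fun s _ => ?_
  rw [fc, div_pow]
  ring

lemma pars (f : (Fin n → Bool) → ℝ) :
    ∑ s : Fin n → Bool, (fc f s)^2 = cubeE n (fun x => (f x)^2) := by
  have h0 : ∑ s : Fin n → Bool, (fc f s)^2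
      = ∑ s : Fin n → Bool, (1:ℝ) ^ wt s * (fc f s)^2 :=
    Finset.sum_congr rfl fun s _ => by rw [one_pow, one_mul]
  rw [h0, pars_weighted]
  have h1 : ∀ x : Fin n → Bool, ∑ y : Fin n → Bool, (f x * f y) * Kk 1 x y
      = (f x)^2 * 2^n := by
    intro x
    have : ∀ y : Fin n → Bool, (f x * f y) * Kk 1 x y
        = if y = x then (f x)^2 * 2^n else 0 := by
      intro y
      rw [Kk_one_diag]
      by_cases h : y = x
      · subst h; simp; ring
      · have h' : ¬ (x = y) := fun hh => h hh.symm
        simp [h, h']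
    rw [Finset.sum_congr rfl fun y _ => this y, Finset.sum_ite_eq' Finset.univ x
      (fun _ => (f x)^2 * 2^n), if_pos (Finset.mem_univ x)]
  rw [Finset.sum_congr rfl fun x _ => h1 x, ← Finset.sum_mul, cubeE]
  field_simp
end Chunk2

section Chunk3
variable {n : ℕ}

noncomputable def Top (σ : ℝ) (f : (Fin n → Bool) → ℝ) : (Fin n → Bool) → ℝ :=
  fun x => ∑ s : Fin n → Bool, σ ^ wt s * fc f s * chi s x

lemma fc_Top (σ : ℝ) (f : (Fin n → Bool) → ℝ) (t : Fin n → Bool) :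
    fc (Top σ f) t = σ ^ wt t * fc f t := by
  unfold fc Top
  have h1 : ∀ x : Fin n → Bool,
      (∑ s : Fin n → Bool, σ ^ wt s * fc f s * chi s x) * chi t x
      = ∑ s : Fin n → Bool, σ ^ wt s * fc f s * (chi s x * chi t x) := by
    intro x; rw [Finset.sum_mul]; exact Finset.sum_congr rfl fun s _ => by ring
  rw [Finset.sum_congr rfl fun x _ => h1 x, Finset.sum_comm]
  have h2 : ∀ s : Fin n → Bool,
      ∑ x : Fin n → Bool, σ ^ wt s * fc f s * (chi s x * chi t x)
      = if s = t then σ ^ wt s * fc f s * 2^n else 0 := by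
    intro s
    rw [← Finset.mul_sum, sum_chi_chi]
    by_cases h : s = t <;> simp [h]
  rw [Finset.sum_congr rfl fun s _ => h2 s,
    Finset.sum_ite_eq' Finset.univ t (fun s => σ ^ wt s * fc f s * 2^n),
    if_pos (Finset.mem_univ t)]
  unfold fc
  field_simp

lemma e2_Top (σ : ℝ) (f : (Fin n → Bool) → ℝ) :
    cubeE n (fun x => (Top σ f x)^2) = ∑ s : Fin n → Bool, (σ^2) ^ wt s * (fc f s)^2 := by
  rw [← pars]
  refine Finset.sum_congr rfl fun s _ => ?_
  rw [fc_Top, mul_pow, ← pow_mul, mul_comm (wt s) 2, pow_mul]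

lemma Top_kernel (σ : ℝ) (f : (Fin n → Bool) → ℝ) (x : Fin n → Bool) :
    Top σ f x = (∑ y : Fin n → Bool, Kk σ x y * f y) / 2^n := by
  unfold Top fc
  have h1 : ∀ s : Fin n → Bool,
      σ ^ wt s * ((∑ y : Fin n → Bool, f y * chi s y) / 2^n) * chi s x
      = (∑ y : Fin n → Bool, f y * (σ ^ wt s * (chi s x * chi s y))) / 2^n := by
    intro s
    have h0 : ∑ y : Fin n → Bool, f y * (σ ^ wt s * (chi s x * chi s y))
        = σ ^ wt s * chi s x * ∑ y : Fin n → Bool, f y * chi s y := by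
      rw [Finset.mul_sum]
      exact Finset.sum_congr rfl fun y _ => by ring
    rw [h0]
    ring
  rw [Finset.sum_congr rfl fun s _ => h1 s, ← Finset.sum_div]
  congr 1
  rw [Finset.sum_comm]
  refine Finset.sum_congr rfl fun y _ => ?_
  rw [← Finset.mul_sum, sum_s_chi]
  ring

lemma cubeE_mono {f g : (Fin n → Bool) → ℝ} (h : ∀ x, f x ≤ g x) :
    cubeE n f ≤ cubeE n g :=
  (div_le_div_iff_of_pos_right two_pow_pos).mpr (Finset.sum_le_sum fun x _ => h x)

lemma cubeE_nonneg {f : (Fin n → Bool) → ℝ} (h : ∀ x, 0 ≤ f x) : 0 ≤ cubeE n f := by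
  have : cubeE n (fun _ => (0:ℝ)) ≤ cubeE n f := cubeE_mono h
  simpa [cubeE] using this

lemma e1_Top_le {σ : ℝ} (h0 : 0 ≤ σ) (h1 : σ ≤ 1) (f : (Fin n → Bool) → ℝ) :
    cubeE n (fun x => |Top σ f x|) ≤ cubeE n (fun x => |f x|) := by
  have hstep : ∀ x, |Top σ f x| ≤ (∑ y : Fin n → Bool, Kk σ x y * |f y|)/2^n := by
    intro x
    rw [Top_kernel, abs_div, abs_of_pos (two_pow_pos (n := n))]
    refine (div_le_div_iff_of_pos_right two_pow_pos).mpr ?_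
    refine (Finset.abs_sum_le_sum_abs _ _).trans (le_of_eq ?_)
    exact Finset.sum_congr rfl fun y _ => by
      rw [abs_mul, abs_of_nonneg (Kk_nonneg h0 h1 x y)]
  refine (cubeE_mono hstep).trans (le_of_eq ?_)
  unfold cubeE
  rw [← Finset.sum_div, Finset.sum_comm]
  have hcol : ∀ y : Fin n → Bool, ∑ x : Fin n → Bool, Kk σ x y * |f y| = 2^n * |f y| := by
    intro y
    rw [← Finset.sum_mul]
    congr 1
    rw [Finset.sum_congr rfl fun x _ => Kk_symm σ x y]
    exact Kk_row_sum σ y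
  rw [Finset.sum_congr rfl fun y _ => hcol y, ← Finset.mul_sum,
    mul_div_cancel_left₀ _ (ne_of_gt (two_pow_pos (n := n)))]

lemma cubeFlip_invol (i : Fin n) (x : Fin n → Bool) :
    cubeFlip n i (cubeFlip n i x) = x := by
  unfold cubeFlip
  rw [Function.update_self, Function.update_idem, Bool.not_not, Function.update_eq_self]

lemma sum_comp_flip (i : Fin n) (F : (Fin n → Bool) → ℝ) :
    ∑ x : Fin n → Bool, F (cubeFlip n i x) = ∑ x : Fin n → Bool, F x :=
  Function.Bijective.sum_comp
    (Function.Involutive.bijective (fun x => cubeFlip_invol i x)) F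

lemma chi_flip (s : Fin n → Bool) (i : Fin n) (x : Fin n → Bool) :
    chi s (cubeFlip n i x) = (if s i then -1 else 1) * chi s x := by
  unfold chi cubeFlip
  rw [← Finset.mul_prod_erase Finset.univ _ (Finset.mem_univ i),
      ← Finset.mul_prod_erase Finset.univ (fun j => if s j then zet (x j) else 1)
        (Finset.mem_univ i)]
  have hrest : (∏ j ∈ Finset.univ.erase i,
        (if s j then zet (Function.update x i (!(x i)) j) else 1))
      = ∏ j ∈ Finset.univ.erase i, (if s j then zet (x j) else 1) :=
    Finset.prod_congr rfl fun j hj => by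
      rw [Function.update_of_ne (Finset.ne_of_mem_erase hj)]
  rw [hrest, Function.update_self]
  by_cases h : s i <;> simp [h, zet_not] <;> ring

lemma fc_Dop (i : Fin n) (f : (Fin n → Bool) → ℝ) (s : Fin n → Bool) :
    fc (Dop n i f) s = if s i then (-2) * fc f s else 0 := by
  unfold fc Dop
  have h1 : ∑ x : Fin n → Bool, (f (cubeFlip n i x) - f x) * chi s x
      = (∑ x : Fin n → Bool, f (cubeFlip n i x) * chi s x)
        - ∑ x : Fin n → Bool, f x * chi s x := by
    rw [← Finset.sum_sub_distrib]
    exact Finset.sum_congr rfl fun x _ => by ring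
  have h2 : ∑ x : Fin n → Bool, f (cubeFlip n i x) * chi s x
      = (if s i then -1 else 1) * ∑ x : Fin n → Bool, f x * chi s x := by
    have h3 := sum_comp_flip i (fun z => f z * chi s (cubeFlip n i z))
    have h4 : ∀ x : Fin n → Bool,
        f (cubeFlip n i x) * chi s (cubeFlip n i (cubeFlip n i x))
        = f (cubeFlip n i x) * chi s x := fun x => by rw [cubeFlip_invol]
    rw [Finset.sum_congr rfl fun x _ => (h4 x).symm, h3,
      Finset.sum_congr rfl fun z _ => by rw [chi_flip s i z], Finset.mul_sum]
    exact Finset.sum_congr rfl fun z _ => by ring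
  rw [h1, h2]
  by_cases h : s i
  · rw [if_pos h, if_pos h]
    field_simp
    ring
  · rw [if_neg h, if_neg h]
    simp

end Chunk3

section Chunk4
variable {n : ℕ}

lemma cubeE_add (f g : (Fin n → Bool) → ℝ) :
    cubeE n (fun x => f x + g x) = cubeE n f + cubeE n g := by
  unfold cubeE; rw [Finset.sum_add_distrib, add_div]

lemma cubeE_smul (c : ℝ) (f : (Fin n → Bool) → ℝ) :
    cubeE n (fun x => c * f x) = c * cubeE n f := by
  unfold cubeE; rw [← Finset.mul_sum, mul_div_assoc]

lemma cubeE_congr {f g : (Fin n → Bool) → ℝ} (h : ∀ x, f x = g x) :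
    cubeE n f = cubeE n g := by
  unfold cubeE; rw [Finset.sum_congr rfl fun x _ => h x]

noncomputable def Tk (n : ℕ) (σ : ℝ) (f : (Fin n → Bool) → ℝ) (x : Fin n → Bool) : ℝ :=
  (∑ y : Fin n → Bool, Kk σ x y * f y) / 2^n

lemma Top_eq_Tk (σ : ℝ) (f : (Fin n → Bool) → ℝ) (x : Fin n → Bool) :
    Top σ f x = Tk n σ f x := Top_kernel σ f x

lemma sum_succ (F : (Fin (n+1) → Bool) → ℝ) :
    ∑ x : Fin (n+1) → Bool, F x
      = ∑ y : Fin n → Bool, (F (Fin.cons true y) + F (Fin.cons false y)) := by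
  rw [← Equiv.sum_comp (Fin.consEquiv (fun _ : Fin (n+1) => Bool)) F, Fintype.sum_prod_type]
  rw [Fintype.sum_bool]
  rw [← Finset.sum_add_distrib]
  rfl

lemma cubeE_succ (F : (Fin (n+1) → Bool) → ℝ) :
    cubeE (n+1) F
      = cubeE n (fun y => (F (Fin.cons true y) + F (Fin.cons false y))/2) := by
  unfold cubeE
  rw [sum_succ, ← Finset.sum_div, pow_succ, div_div]
  ring

lemma Kk_succ (σ : ℝ) (b c : Bool) (x y : Fin n → Bool) :
    Kk σ (Fin.cons b x) (Fin.cons c y)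
      = (1 + σ * (zet b * zet c)) * Kk σ x y := by
  unfold Kk
  rw [Fin.prod_univ_succ]
  simp only [Fin.cons_zero, Fin.cons_succ]

lemma Tk_succ (σ : ℝ) (F : (Fin (n+1) → Bool) → ℝ) (b : Bool) (x : Fin n → Bool) :
    Tk (n+1) σ F (Fin.cons b x)
      = Tk n σ (fun y => (F (Fin.cons true y) + F (Fin.cons false y))/2) x
        + σ * zet b *
          Tk n σ (fun y => (F (Fin.cons true y) - F (Fin.cons false y))/2) x := by
  unfold Tk
  rw [sum_succ (fun y' => Kk σ (Fin.cons b x) y' * F y')]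
  have h1 : ∀ y : Fin n → Bool,
      Kk σ (Fin.cons b x) (Fin.cons true y) * F (Fin.cons true y)
        + Kk σ (Fin.cons b x) (Fin.cons false y) * F (Fin.cons false y)
      = 2 * (Kk σ x y * ((F (Fin.cons true y) + F (Fin.cons false y))/2)
        + σ * zet b * (Kk σ x y * ((F (Fin.cons true y) - F (Fin.cons false y))/2))) := by
    intro y
    rw [Kk_succ, Kk_succ]
    have hzt : zet true = 1 := rfl
    have hzf : zet false = -1 := rfl
    rw [hzt, hzf]
    ring
  rw [Finset.sum_congr rfl fun y _ => h1 y, ← Finset.mul_sum, Finset.sum_add_distrib,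
    ← Finset.mul_sum, pow_succ]
  field_simp

set_option maxHeartbeats 2000000 in
lemma hyper24 : ∀ (n : ℕ) (σ : ℝ), σ^2 ≤ 1/3 →
    ∀ f : (Fin n → Bool) → ℝ,
      cubeE n (fun x => (Tk n σ f x)^4) ≤ (cubeE n (fun x => (f x)^2))^2 := by
  intro n
  induction n with
  | zero =>
    intro σ hσ f
    have huniq : ∀ (x y : Fin 0 → Bool), x = y := fun x y => funext fun i => i.elim0
    have hE : ∀ g : (Fin 0 → Bool) → ℝ, cubeE 0 g = g default := by
      intro g
      unfold cubeE
      rw [Fintype.sum_unique g, pow_zero, div_one]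
      exact congrArg g (huniq _ _)
    have hKone : ∀ x y : Fin 0 → Bool, Kk σ x y = 1 := fun x y => by
      unfold Kk
      rw [Finset.univ_eq_empty, Finset.prod_empty]
    have hT : ∀ x : Fin 0 → Bool, Tk 0 σ f x = f default := by
      intro x
      unfold Tk
      rw [Fintype.sum_unique (fun y => Kk σ x y * f y), hKone, pow_zero]
      rw [one_mul, div_one]
      exact congrArg f (huniq _ _)
    rw [hE, hE, hT]
    exact le_of_eq (by ring)
  | succ n ih =>
    intro σ hσ F
    set G : (Fin n → Bool) → ℝ := fun y => (F (Fin.cons true y) + F (Fin.cons false y))/2 with hG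
    set H : (Fin n → Bool) → ℝ := fun y => (F (Fin.cons true y) - F (Fin.cons false y))/2 with hH
    set A : (Fin n → Bool) → ℝ := Tk n σ G with hA
    set B : (Fin n → Bool) → ℝ := Tk n σ H with hB
    have hdecomp : cubeE (n+1) (fun x => (Tk (n+1) σ F x)^4)
        = cubeE n (fun y => (A y)^4) + (6*σ^2) * cubeE n (fun y => (A y)^2*(B y)^2)
          + σ^4 * cubeE n (fun y => (B y)^4) := by
      rw [cubeE_succ (fun x => (Tk (n+1) σ F x)^4)]
      have h1 : ∀ y : Fin n → Bool,
          ((Tk (n+1) σ F (Fin.cons true y))^4 + (Tk (n+1) σ F (Fin.cons false y))^4)/2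
          = (A y)^4 + (6*σ^2) * ((A y)^2*(B y)^2) + σ^4 * (B y)^4 := by
        intro y
        rw [Tk_succ, Tk_succ]
        have hzt : zet true = 1 := rfl
        have hzf : zet false = -1 := rfl
        rw [hzt, hzf, ← hA, ← hB]
        ring
      rw [cubeE_congr h1]
      rw [cubeE_add, cubeE_add, cubeE_smul, cubeE_smul]
    have hF2 : cubeE (n+1) (fun x => (F x)^2)
        = cubeE n (fun y => (G y)^2) + cubeE n (fun y => (H y)^2) := by
      rw [cubeE_succ (fun x => (F x)^2), ← cubeE_add]
      refine cubeE_congr fun y => ?_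
      rw [hG, hH]
      ring
    set X := cubeE n (fun y => (G y)^2) with hX
    set Y := cubeE n (fun y => (H y)^2) with hY
    have hXnn : 0 ≤ X := cubeE_nonneg fun y => sq_nonneg _
    have hYnn : 0 ≤ Y := cubeE_nonneg fun y => sq_nonneg _
    have hIA : cubeE n (fun y => (A y)^4) ≤ X^2 := ih σ hσ G
    have hIB : cubeE n (fun y => (B y)^4) ≤ Y^2 := ih σ hσ H
    have hA4nn : 0 ≤ cubeE n (fun y => (A y)^4) :=
      cubeE_nonneg fun y => by positivity
    have hB4nn : 0 ≤ cubeE n (fun y => (B y)^4) :=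
      cubeE_nonneg fun y => by positivity
    have hMnn : 0 ≤ cubeE n (fun y => (A y)^2*(B y)^2) :=
      cubeE_nonneg fun y => by positivity
    have hCS : (cubeE n (fun y => (A y)^2*(B y)^2))^2
        ≤ cubeE n (fun y => (A y)^4) * cubeE n (fun y => (B y)^4) := by
      unfold cubeE
      rw [div_pow, div_mul_div_comm, ← sq]
      refine div_le_div_of_nonneg_right ?_ (by positivity)
      calc (∑ y : Fin n → Bool, (A y)^2*(B y)^2)^2
          ≤ (∑ y : Fin n → Bool, ((A y)^2)^2) * (∑ y : Fin n → Bool, ((B y)^2)^2) :=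
            sum_mul_sq_le_sq_mul_sq Finset.univ _ _
        _ = (∑ y : Fin n → Bool, (A y)^4) * (∑ y : Fin n → Bool, (B y)^4) := by
            congr 1
            · exact Finset.sum_congr rfl fun y _ => by ring
            · exact Finset.sum_congr rfl fun y _ => by ring
    have hM : cubeE n (fun y => (A y)^2*(B y)^2) ≤ X*Y := by
      nlinarith [hCS, hIA, hIB, hMnn, mul_nonneg hXnn hYnn, hA4nn, hB4nn]
    have hσnn : (0:ℝ) ≤ σ^2 := sq_nonneg σ
    have hM6 : (6*σ^2) * cubeE n (fun y => (A y)^2*(B y)^2) ≤ 2*(X*Y) := by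
      have h2σ : 6*σ^2 ≤ 2 := by nlinarith
      have := mul_le_mul h2σ hM hMnn (by norm_num)
      linarith
    have hσ4 : σ^4 * cubeE n (fun y => (B y)^4) ≤ Y^2 := by
      have h1 : σ^4 ≤ 1 := by nlinarith
      have h2 : (0:ℝ) ≤ σ^4 := by positivity
      have := mul_le_mul h1 hIB hB4nn (by norm_num)
      linarith
    rw [hdecomp, hF2]
    nlinarith [hM6, hIA, hσ4]

end Chunk4

section Chunk5
variable {n : ℕ}

lemma cubeE_abs_le (f : (Fin n → Bool) → ℝ) :
    cubeE n f ≤ cubeE n (fun x => |f x|) :=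
  cubeE_mono fun x => le_abs_self _

lemma cubeE_holder {p q : ℝ} (hpq : Real.HolderConjugate p q)
    (f g : (Fin n → Bool) → ℝ) (hf : ∀ x, 0 ≤ f x) (hg : ∀ x, 0 ≤ g x) :
    cubeE n (fun x => f x * g x)
      ≤ (cubeE n (fun x => f x ^ p))^(1/p) * (cubeE n (fun x => g x ^ q))^(1/q) := by
  have e1 : ∑ x : Fin n → Bool, |f x| ^ p = ∑ x : Fin n → Bool, f x ^ p :=
    Finset.sum_congr rfl fun x _ => by rw [abs_of_nonneg (hf x)]
  have e2 : ∑ x : Fin n → Bool, |g x| ^ q = ∑ x : Fin n → Bool, g x ^ q :=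
    Finset.sum_congr rfl fun x _ => by rw [abs_of_nonneg (hg x)]
  have hS : ∑ x : Fin n → Bool, f x * g x
      ≤ (∑ x : Fin n → Bool, f x ^ p)^(1/p) * (∑ x : Fin n → Bool, g x ^ q)^(1/q) := by
    rw [← e1, ← e2]
    exact Real.inner_le_Lp_mul_Lq Finset.univ f g hpq
  unfold cubeE
  have hfp : 0 ≤ ∑ x : Fin n → Bool, f x ^ p :=
    Finset.sum_nonneg fun x _ => Real.rpow_nonneg (hf x) p
  have hgq : 0 ≤ ∑ x : Fin n → Bool, g x ^ q :=
    Finset.sum_nonneg fun x _ => Real.rpow_nonneg (hg x) q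
  rw [Real.div_rpow hfp (le_of_lt two_pow_pos), Real.div_rpow hgq (le_of_lt two_pow_pos),
    div_mul_div_comm, ← Real.rpow_add two_pow_pos]
  have hone : 1/p + 1/q = 1 := by
    rw [one_div, one_div]; exact hpq.inv_add_inv_eq_one
  rw [hone, Real.rpow_one]
  exact (div_le_div_iff_of_pos_right two_pow_pos).mpr hS

lemma conj43 : Real.HolderConjugate (4/3) 4 := ⟨by norm_num, by norm_num, by norm_num⟩
lemma conj32 : Real.HolderConjugate (3/2) 3 := ⟨by norm_num, by norm_num, by norm_num⟩

lemma interp43 (h : (Fin n → Bool) → ℝ) :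
    cubeE n (fun x => |h x| ^ (4/3 : ℝ))
      ≤ (cubeE n (fun x => |h x|))^(2/3 : ℝ) * (cubeE n (fun x => (h x)^2))^(1/3 : ℝ) := by
  have key := cubeE_holder conj32 (fun x => |h x| ^ (2/3 : ℝ)) (fun x => |h x| ^ (2/3 : ℝ))
    (fun x => Real.rpow_nonneg (abs_nonneg _) _) (fun x => Real.rpow_nonneg (abs_nonneg _) _)
  have e0 : cubeE n (fun x => |h x| ^ (2/3 : ℝ) * |h x| ^ (2/3 : ℝ))
      = cubeE n (fun x => |h x| ^ (4/3 : ℝ)) := by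
    refine cubeE_congr fun x => ?_
    rw [← Real.rpow_add' (abs_nonneg _) (by norm_num : (2/3:ℝ) + 2/3 ≠ 0)]
    norm_num
  have e1 : cubeE n (fun x => (|h x| ^ (2/3 : ℝ)) ^ ((3:ℝ)/2))
      = cubeE n (fun x => |h x|) := by
    refine cubeE_congr fun x => ?_
    rw [← Real.rpow_mul (abs_nonneg _), show (2/3:ℝ)*(3/2) = ((1:ℕ):ℝ) by norm_num,
      Real.rpow_natCast, pow_one]
  have e2 : cubeE n (fun x => (|h x| ^ (2/3 : ℝ)) ^ (3:ℝ))
      = cubeE n (fun x => (h x)^2) := by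
    refine cubeE_congr fun x => ?_
    rw [← Real.rpow_mul (abs_nonneg _), show (2/3:ℝ)*3 = ((2:ℕ):ℝ) by norm_num,
      Real.rpow_natCast, sq_abs]
  rw [e0, e1, e2] at key
  have h32 : (1:ℝ)/(3/2) = 2/3 := by norm_num
  rw [h32] at key
  exact key

lemma bilinear_Top (σ : ℝ) (f g : (Fin n → Bool) → ℝ) :
    cubeE n (fun x => Top σ f x * g x)
      = ∑ s : Fin n → Bool, σ ^ wt s * (fc f s * fc g s) := by
  unfold cubeE Top
  have h1 : ∀ x : Fin n → Bool,
      (∑ s : Fin n → Bool, σ ^ wt s * fc f s * chi s x) * g x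
      = ∑ s : Fin n → Bool, σ ^ wt s * fc f s * (g x * chi s x) := by
    intro x; rw [Finset.sum_mul]; exact Finset.sum_congr rfl fun s _ => by ring
  rw [Finset.sum_congr rfl fun x _ => h1 x, Finset.sum_comm, Finset.sum_div]
  refine Finset.sum_congr rfl fun s _ => ?_
  rw [← Finset.mul_sum]
  unfold fc
  rw [mul_div_assoc]
  ring

lemma dual43 {δ : ℝ} (hδ : δ^2 ≤ 1/3) (h : (Fin n → Bool) → ℝ) :
    cubeE n (fun x => (Top δ h x)^2)
      ≤ (cubeE n (fun x => |h x| ^ (4/3:ℝ)))^((3:ℝ)/2) := by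
  set X := cubeE n (fun x => (Top δ h x)^2) with hXdef
  have hXnn : 0 ≤ X := cubeE_nonneg fun x => sq_nonneg _
  set N := cubeE n (fun x => |h x| ^ (4/3:ℝ)) with hNdef
  have hNnn : 0 ≤ N := cubeE_nonneg fun x => Real.rpow_nonneg (abs_nonneg _) _
  set G : (Fin n → Bool) → ℝ := Top δ (Top δ h) with hGdef
  have step1 : X ≤ cubeE n (fun x => |h x| * |G x|) := by
    have j1 : X = ∑ s : Fin n → Bool, δ ^ wt s * (fc h s * fc (Top δ h) s) := by
      rw [hXdef, ← bilinear_Top δ h (Top δ h)]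
      exact cubeE_congr fun x => by rw [sq]
    have j2 := bilinear_Top δ (Top δ h) h
    have j3 : X = cubeE n (fun x => G x * h x) := by
      rw [j1, hGdef, j2]
      exact Finset.sum_congr rfl fun s _ => by ring
    rw [j3]
    refine (cubeE_abs_le _).trans (le_of_eq (cubeE_congr fun x => ?_))
    rw [abs_mul, mul_comm]
  have step2 : cubeE n (fun x => |h x| * |G x|)
      ≤ N^((3:ℝ)/4) * (cubeE n (fun x => |G x| ^ (4:ℝ)))^((1:ℝ)/4) := by
    have hh := cubeE_holder conj43 (fun x => |h x|) (fun x => |G x|)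
      (fun x => abs_nonneg _) (fun x => abs_nonneg _)
    have e43 : (1:ℝ)/(4/3) = 3/4 := by norm_num
    rw [e43] at hh
    calc cubeE n (fun x => |h x| * |G x|)
        ≤ (cubeE n (fun x => |h x| ^ (4/3:ℝ)))^((3:ℝ)/4)
            * (cubeE n (fun x => |G x| ^ (4:ℝ)))^((1:ℝ)/4) := hh
      _ = N^((3:ℝ)/4) * (cubeE n (fun x => |G x| ^ (4:ℝ)))^((1:ℝ)/4) := by rw [hNdef]
  have hyper4 : cubeE n (fun x => |G x| ^ (4:ℝ)) ≤ X^2 := by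
    have e4 : ∀ x : Fin n → Bool, |G x| ^ (4:ℝ) = (Tk n δ (Top δ h) x)^4 := by
      intro x
      rw [show (4:ℝ) = ((4:ℕ):ℝ) by norm_num, Real.rpow_natCast, ← abs_pow,
        abs_of_nonneg (by positivity : (0:ℝ) ≤ (G x)^4), hGdef, Top_eq_Tk]
    rw [cubeE_congr e4]
    refine (hyper24 n δ hδ (Top δ h)).trans (le_of_eq ?_)
    rw [hXdef]
  have hGnn : 0 ≤ cubeE n (fun x => |G x| ^ (4:ℝ)) :=
    cubeE_nonneg fun x => Real.rpow_nonneg (abs_nonneg _) _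
  have step3 : X ≤ N^((3:ℝ)/4) * Real.sqrt X := by
    have m1 : (cubeE n (fun x => |G x| ^ (4:ℝ)))^((1:ℝ)/4) ≤ (X^2)^((1:ℝ)/4) :=
      Real.rpow_le_rpow hGnn hyper4 (by norm_num)
    have m2 : (X^2)^((1:ℝ)/4) = Real.sqrt X := by
      rw [← Real.rpow_natCast X 2, ← Real.rpow_mul hXnn,
        show ((2:ℕ):ℝ) * ((1:ℝ)/4) = 1/2 by norm_num]
      exact (Real.sqrt_eq_rpow X).symm
    refine step1.trans (step2.trans ?_)
    calc N^((3:ℝ)/4) * (cubeE n (fun x => |G x| ^ (4:ℝ)))^((1:ℝ)/4)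
        ≤ N^((3:ℝ)/4) * (X^2)^((1:ℝ)/4) :=
          mul_le_mul_of_nonneg_left m1 (Real.rpow_nonneg hNnn _)
      _ = N^((3:ℝ)/4) * Real.sqrt X := by rw [m2]
  have hb : (0:ℝ) ≤ N^((3:ℝ)/4) := Real.rpow_nonneg hNnn _
  have hsq : Real.sqrt X ^ 2 = X := Real.sq_sqrt hXnn
  have hfin : X ≤ (N^((3:ℝ)/4))^2 := by
    nlinarith [sq_nonneg (Real.sqrt X - N^((3:ℝ)/4)), Real.sqrt_nonneg X, step3, hsq,
      mul_nonneg hb (Real.sqrt_nonneg X)]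
  refine hfin.trans (le_of_eq ?_)
  rw [← Real.rpow_natCast (N^((3:ℝ)/4)) 2, ← Real.rpow_mul hNnn,
    show ((3:ℝ)/4) * ((2:ℕ):ℝ) = 3/2 by norm_num]

end Chunk5

section Chunk6
variable {n : ℕ}

lemma fcD_sq (i : Fin n) (f : (Fin n → Bool) → ℝ) (s : Fin n → Bool) :
    (fc (Dop n i f) s)^2 = if s i = true then 4 * (fc f s)^2 else 0 := by
  rw [fc_Dop]
  by_cases h : s i = true
  · rw [if_pos h, if_pos h]; ring
  · rw [if_neg h, if_neg h]; norm_num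

lemma Pi_bound (i : Fin n) (f : (Fin n → Bool) → ℝ) {τ : ℝ} (h0 : 0 ≤ τ) (h6 : τ ≤ 1/6) :
    ∑ s : Fin n → Bool, (if s i = true then τ ^ wt s * (fc f s)^2 else 0)
      ≤ (cubeE n (fun x => |Dop n i f x|) / 2)
        * Real.sqrt (∑ s : Fin n → Bool,
            (if s i = true then (3*τ) ^ wt s * (fc f s)^2 else 0)) := by
  set δ : ℝ := Real.sqrt (1/3) with hδdef
  set u : ℝ := Real.sqrt (3*τ) with hudef
  have hδ2 : δ^2 = 1/3 := Real.sq_sqrt (by norm_num)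
  have hu2 : u^2 = 3*τ := Real.sq_sqrt (by linarith)
  have hunn : 0 ≤ u := Real.sqrt_nonneg _
  have hu1 : u ≤ 1 := by
    rw [hudef]
    exact Real.sqrt_le_one.mpr (by linarith)
  set g := Top u (Dop n i f) with hgdef
  set P := ∑ s : Fin n → Bool, (if s i = true then τ ^ wt s * (fc f s)^2 else 0) with hPdef
  set Q := ∑ s : Fin n → Bool, (if s i = true then (3*τ) ^ wt s * (fc f s)^2 else 0) with hQdef
  have hQnn : 0 ≤ Q := Finset.sum_nonneg fun s _ => by
    by_cases hs : s i = true
    · rw [if_pos hs]; exact mul_nonneg (pow_nonneg (by linarith) _) (sq_nonneg _)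
    · rw [if_neg hs]
  have hfcg : ∀ s : Fin n → Bool,
      (fc g s)^2 = (u^2)^(wt s) * (if s i = true then 4 * (fc f s)^2 else 0) := by
    intro s
    rw [hgdef, fc_Top, mul_pow, ← pow_mul, mul_comm (wt s) 2, pow_mul, fcD_sq]
  have id1 : cubeE n (fun x => (Top δ g x)^2) = 4 * P := by
    rw [e2_Top δ g, Finset.sum_congr rfl fun s _ => by rw [hfcg s], hPdef, Finset.mul_sum]
    refine Finset.sum_congr rfl fun s _ => ?_
    by_cases hs : s i = true
    · rw [if_pos hs, if_pos hs, ← mul_assoc, ← mul_pow, hδ2, hu2,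
        show (1/3:ℝ)*(3*τ) = τ by ring]
      ring
    · rw [if_neg hs, if_neg hs]; ring
  have id2 : cubeE n (fun x => (g x)^2) = 4 * Q := by
    rw [← pars g, Finset.sum_congr rfl fun s _ => by rw [hfcg s], hQdef, Finset.mul_sum]
    refine Finset.sum_congr rfl fun s _ => ?_
    by_cases hs : s i = true
    · rw [if_pos hs, if_pos hs, hu2]; ring
    · rw [if_neg hs, if_neg hs]; ring
  have in1 : cubeE n (fun x => |g x|) ≤ cubeE n (fun x => |Dop n i f x|) := by
    rw [hgdef]
    exact e1_Top_le hunn hu1 (Dop n i f)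
  have hE1nn : 0 ≤ cubeE n (fun x => |g x|) := cubeE_nonneg fun x => abs_nonneg _
  have hE2nn : 0 ≤ cubeE n (fun x => (g x)^2) := cubeE_nonneg fun x => sq_nonneg _
  have hNnn : 0 ≤ cubeE n (fun x => |g x| ^ (4/3:ℝ)) :=
    cubeE_nonneg fun x => Real.rpow_nonneg (abs_nonneg _) _
  have hμnn : 0 ≤ cubeE n (fun x => |Dop n i f x|) := cubeE_nonneg fun x => abs_nonneg _
  have mid : ((cubeE n (fun x => |g x|))^(2/3:ℝ) * (cubeE n (fun x => (g x)^2))^(1/3:ℝ))^((3:ℝ)/2)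
      = cubeE n (fun x => |g x|) * Real.sqrt (cubeE n (fun x => (g x)^2)) := by
    rw [Real.mul_rpow (Real.rpow_nonneg hE1nn _) (Real.rpow_nonneg hE2nn _),
      ← Real.rpow_mul hE1nn, ← Real.rpow_mul hE2nn,
      show (2/3:ℝ)*(3/2) = ((1:ℕ):ℝ) by norm_num,
      show (1/3:ℝ)*(3/2) = (1/2:ℝ) by norm_num,
      Real.rpow_natCast, pow_one, Real.sqrt_eq_rpow]
  have chain : 4 * P ≤ cubeE n (fun x => |Dop n i f x|) * Real.sqrt (4*Q) := by
    calc 4 * P = cubeE n (fun x => (Top δ g x)^2) := id1.symm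
      _ ≤ (cubeE n (fun x => |g x| ^ (4/3:ℝ)))^((3:ℝ)/2) := dual43 hδ2.le g
      _ ≤ ((cubeE n (fun x => |g x|))^(2/3:ℝ)
            * (cubeE n (fun x => (g x)^2))^(1/3:ℝ))^((3:ℝ)/2) :=
        Real.rpow_le_rpow hNnn (interp43 g) (by norm_num)
      _ = cubeE n (fun x => |g x|) * Real.sqrt (cubeE n (fun x => (g x)^2)) := mid
      _ ≤ cubeE n (fun x => |Dop n i f x|) * Real.sqrt (cubeE n (fun x => (g x)^2)) :=
        mul_le_mul_of_nonneg_right in1 (Real.sqrt_nonneg _)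
      _ = cubeE n (fun x => |Dop n i f x|) * Real.sqrt (4*Q) := by rw [id2]
  have sqrt4Q : Real.sqrt (4*Q) = 2 * Real.sqrt Q := by
    rw [show (4:ℝ) = 2^2 by norm_num, Real.sqrt_mul (by positivity) Q,
      Real.sqrt_sq (by norm_num : (0:ℝ) ≤ 2)]
  rw [sqrt4Q] at chain
  have : cubeE n (fun x => |Dop n i f x|) * (2 * Real.sqrt Q)
      = 4 * ((cubeE n (fun x => |Dop n i f x|) / 2) * Real.sqrt Q) := by ring
  rw [this] at chain
  linarith

lemma two_mul_le_two_pow : ∀ j : ℕ, 2*j ≤ 2^j := by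
  intro j
  induction j with
  | zero => norm_num
  | succ k ih =>
    cases k with
    | zero => norm_num
    | succ m =>
      have h2 : 2 ≤ 2^(m+1) := by
        calc (2:ℕ) = 2^1 := rfl
          _ ≤ 2^(m+1) := Nat.pow_le_pow_right (by norm_num) (by omega)
      calc 2*(m+1+1) = 2*(m+1) + 2 := by ring
        _ ≤ 2^(m+1) + 2^(m+1) := Nat.add_le_add ih h2
        _ = 2^(m+1+1) := by ring

lemma j_xj_le_half {x : ℝ} (h0 : 0 ≤ x) (hx : x ≤ 1/2) (j : ℕ) : (j:ℝ) * x^j ≤ 1/2 := by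
  have h1 : x^j ≤ (1/2:ℝ)^j := pow_le_pow_left₀ h0 hx j
  have h2 : (j:ℝ) * x^j ≤ (j:ℝ) * (1/2)^j :=
    mul_le_mul_of_nonneg_left h1 (Nat.cast_nonneg j)
  refine h2.trans ?_
  have h3 : (2:ℝ)*j ≤ 2^j := by exact_mod_cast two_mul_le_two_pow j
  have h4 : (0:ℝ) < 2^j := by positivity
  rw [show ((1:ℝ)/2)^j = ((2:ℝ)^j)⁻¹ by rw [one_div, inv_pow], inv_eq_one_div,
    mul_one_div, div_le_iff₀ h4]
  linarith

lemma wt_pos_of_ne_zero {s : Fin n → Bool} (hs : s ≠ (fun _ => false)) : 1 ≤ wt s := by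
  rcases Nat.eq_zero_or_pos (wt s) with h0 | h1
  · exfalso
    apply hs
    funext i
    have hall := Finset.sum_eq_zero_iff.mp h0 i (Finset.mem_univ i)
    by_cases hsi : s i = true
    · rw [if_pos hsi] at hall; exact absurd hall one_ne_zero
    · simpa using hsi
  · exact h1

lemma cast_wt (s : Fin n → Bool) :
    ((wt s : ℕ) : ℝ) = ∑ i : Fin n, (if s i = true then (1:ℝ) else 0) := by
  rw [wt, Nat.cast_sum]
  exact Finset.sum_congr rfl fun i _ => by by_cases hsi : s i = true <;> simp [hsi]

lemma wt_swap (c : (Fin n → Bool) → ℝ) :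
    ∑ i : Fin n, ∑ s : Fin n → Bool, (if s i = true then c s else 0)
      = ∑ s : Fin n → Bool, (wt s : ℝ) * c s := by
  rw [Finset.sum_comm]
  refine Finset.sum_congr rfl fun s _ => ?_
  rw [cast_wt, Finset.sum_mul]
  exact Finset.sum_congr rfl fun i _ => by by_cases hsi : s i = true <;> simp [hsi]

lemma Vsum_bound (f : (Fin n → Bool) → ℝ) {τ : ℝ} (h0 : 0 ≤ τ) (h6 : τ ≤ 1/6)
    (hsum1 : ∑ s : Fin n → Bool, (fc f s)^2 = 1) :
    ∑ s ∈ Finset.univ.erase (fun _ => false), τ ^ wt s * (fc f s)^2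
      ≤ Real.sqrt ((1/4) * ∑ i : Fin n, (cubeE n (fun x => |Dop n i f x|))^2) := by
  set μ : Fin n → ℝ := fun i => cubeE n (fun x => |Dop n i f x|) with hμdef
  have hμnn : ∀ i, 0 ≤ μ i := fun i => cubeE_nonneg fun x => abs_nonneg _
  set Qe : Fin n → ℝ := fun i => ∑ s : Fin n → Bool,
      (if s i = true then (3*τ) ^ wt s * (fc f s)^2 else 0) with hQedef
  have hQenn : ∀ i, 0 ≤ Qe i := fun i => Finset.sum_nonneg fun s _ => by
    by_cases hs : s i = true
    · rw [if_pos hs]; exact mul_nonneg (pow_nonneg (by linarith) _) (sq_nonneg _)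
    · rw [if_neg hs]
  have step_a : ∑ s ∈ Finset.univ.erase (fun _ => false), τ ^ wt s * (fc f s)^2
      ≤ ∑ s : Fin n → Bool, (wt s : ℝ) * (τ ^ wt s * (fc f s)^2) := by
    refine (Finset.sum_le_sum ?_).trans
      (Finset.sum_le_sum_of_subset_of_nonneg (Finset.subset_univ _) ?_)
    · intro s hs
      have h1 : 1 ≤ wt s := wt_pos_of_ne_zero (Finset.ne_of_mem_erase hs)
      have h1' : (1:ℝ) ≤ (wt s : ℝ) := by exact_mod_cast h1
      have hterm : 0 ≤ τ ^ wt s * (fc f s)^2 :=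
        mul_nonneg (pow_nonneg h0 _) (sq_nonneg _)
      nlinarith
    · intro s _ _
      exact mul_nonneg (Nat.cast_nonneg _)
        (mul_nonneg (pow_nonneg h0 _) (sq_nonneg _))
  have step_b : ∑ s : Fin n → Bool, (wt s : ℝ) * (τ ^ wt s * (fc f s)^2)
      = ∑ i : Fin n, ∑ s : Fin n → Bool,
          (if s i = true then τ ^ wt s * (fc f s)^2 else 0) :=
    (wt_swap _).symm
  have step_c : ∑ i : Fin n, ∑ s : Fin n → Bool,
        (if s i = true then τ ^ wt s * (fc f s)^2 else 0)
      ≤ ∑ i : Fin n, (μ i / 2) * Real.sqrt (Qe i) :=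
    Finset.sum_le_sum fun i _ => Pi_bound i f h0 h6
  have step_e : ∑ i : Fin n, Qe i ≤ 1/2 := by
    have e1 : ∑ i : Fin n, Qe i
        = ∑ s : Fin n → Bool, (wt s : ℝ) * ((3*τ) ^ wt s * (fc f s)^2) := wt_swap _
    rw [e1]
    have e2 : ∀ s : Fin n → Bool, (wt s : ℝ) * ((3*τ) ^ wt s * (fc f s)^2)
        ≤ (1/2) * (fc f s)^2 := by
      intro s
      have h3τ : 0 ≤ 3*τ := by linarith
      have h3τ' : 3*τ ≤ 1/2 := by linarith
      have := j_xj_le_half h3τ h3τ' (wt s)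
      have hfc : (0:ℝ) ≤ (fc f s)^2 := sq_nonneg _
      nlinarith
    refine (Finset.sum_le_sum fun s _ => e2 s).trans ?_
    rw [← Finset.mul_sum, hsum1]
    norm_num
  have step_d : ∑ i : Fin n, (μ i / 2) * Real.sqrt (Qe i)
      ≤ Real.sqrt ((1/4) * ∑ i : Fin n, (μ i)^2) := by
    have hcs := sum_mul_sq_le_sq_mul_sq Finset.univ (fun i => μ i / 2)
      (fun i => Real.sqrt (Qe i))
    have hsq : ∀ i : Fin n, (Real.sqrt (Qe i))^2 = Qe i := fun i => Real.sq_sqrt (hQenn i)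
    have hlhs_nn : 0 ≤ ∑ i : Fin n, (μ i / 2) * Real.sqrt (Qe i) :=
      Finset.sum_nonneg fun i _ =>
        mul_nonneg (by linarith [hμnn i]) (Real.sqrt_nonneg _)
    have hrw : ∑ i : Fin n, (Real.sqrt (Qe i))^2 = ∑ i : Fin n, Qe i :=
      Finset.sum_congr rfl fun i _ => hsq i
    rw [hrw] at hcs
    have hb : (∑ i : Fin n, (μ i / 2) * Real.sqrt (Qe i))^2
        ≤ (1/4) * ∑ i : Fin n, (μ i)^2 := by
      have h1 : ∑ i : Fin n, (μ i / 2)^2 = (1/4) * ∑ i : Fin n, (μ i)^2 := by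
        rw [Finset.mul_sum]
        exact Finset.sum_congr rfl fun i _ => by ring
      have h2 : ∑ i : Fin n, Qe i ≤ 1/2 := step_e
      have h3 : 0 ≤ ∑ i : Fin n, (μ i / 2)^2 :=
        Finset.sum_nonneg fun i _ => sq_nonneg _
      calc (∑ i : Fin n, (μ i / 2) * Real.sqrt (Qe i))^2
          ≤ (∑ i : Fin n, (μ i / 2)^2) * (∑ i : Fin n, Qe i) := hcs
        _ ≤ (∑ i : Fin n, (μ i / 2)^2) * 1 := by nlinarith
        _ = (1/4) * ∑ i : Fin n, (μ i)^2 := by rw [mul_one, h1]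
    calc ∑ i : Fin n, (μ i / 2) * Real.sqrt (Qe i)
        = Real.sqrt ((∑ i : Fin n, (μ i / 2) * Real.sqrt (Qe i))^2) :=
          (Real.sqrt_sq hlhs_nn).symm
      _ ≤ Real.sqrt ((1/4) * ∑ i : Fin n, (μ i)^2) := Real.sqrt_le_sqrt hb
  calc ∑ s ∈ Finset.univ.erase (fun _ => false), τ ^ wt s * (fc f s)^2
      ≤ ∑ s : Fin n → Bool, (wt s : ℝ) * (τ ^ wt s * (fc f s)^2) := step_a
    _ = _ := step_b
    _ ≤ ∑ i : Fin n, (μ i / 2) * Real.sqrt (Qe i) := step_c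
    _ ≤ Real.sqrt ((1/4) * ∑ i : Fin n, (μ i)^2) := step_d

end Chunk6

section Chunk7
variable {n : ℕ}

lemma nsW_factor (η : ℝ) (a b : Bool) :
    nsW η a b = (1 + (1-η) * (zet a * zet b))/4 := by
  cases a <;> cases b <;> simp [nsW, zet] <;> ring

lemma prod_nsW (η : ℝ) (x y : Fin n → Bool) :
    ∏ i, nsW η (x i) (y i) = Kk (1-η) x y / 4^n := by
  rw [Finset.prod_congr rfl fun i _ => nsW_factor η (x i) (y i), Finset.prod_div_distrib,
    Finset.prod_const, Finset.card_univ, Fintype.card_fin]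
  rfl

lemma pow2_sq : ((2:ℝ)^n)^2 = 4^n := by
  rw [← pow_mul, mul_comm n 2, pow_mul]
  norm_num

lemma cubeNS_eq (f : (Fin n → Bool) → ℝ) (η : ℝ) :
    cubeNS n f η
      = ∑ s ∈ Finset.univ.erase (fun _ : Fin n => false), (1-η) ^ wt s * (fc f s)^2 := by
  unfold cubeNS
  have hterm : ∀ x y : Fin n → Bool, f x * f y * ∏ i, nsW η (x i) (y i)
      = (f x * f y * Kk (1-η) x y)/4^n := by
    intro x y; rw [prod_nsW]; ring
  have hd : ∑ x : Fin n → Bool, ∑ y : Fin n → Bool, f x * f y * ∏ i, nsW η (x i) (y i)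
      = ∑ s : Fin n → Bool, (1-η) ^ wt s * (fc f s)^2 := by
    rw [pars_weighted f (1-η), pow2_sq]
    rw [Finset.sum_congr rfl fun x _ => Finset.sum_congr rfl fun y _ => hterm x y]
    rw [Finset.sum_congr rfl fun x _ => (Finset.sum_div _ _ _).symm, ← Finset.sum_div]
  rw [hd, cubeE_eq_fc_zero]
  rw [← Finset.sum_erase_add Finset.univ _ (Finset.mem_univ (fun _ : Fin n => false))]
  have hwt0 : wt (fun _ : Fin n => false) = 0 := by simp [wt]
  rw [hwt0, pow_zero, one_mul]
  ring

lemma sum_fc_sq_one (f : (Fin n → Bool) → ℝ)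
    (hf : (cubeE n fun x => f x ^ 2) ^ ((1:ℝ)/2) = 1) :
    ∑ s : Fin n → Bool, (fc f s)^2 = 1 := by
  rw [pars]
  have hnn : 0 ≤ cubeE n fun x => f x ^ 2 := cubeE_nonneg fun x => sq_nonneg _
  have h2 : ((cubeE n fun x => f x ^ 2) ^ ((1:ℝ)/2)) ^ (2:ℝ) = 1 ^ (2:ℝ) := by rw [hf]
  rw [← Real.rpow_mul hnn, show (1:ℝ)/2 * 2 = 1 by norm_num, Real.rpow_one,
    Real.one_rpow] at h2
  exact h2

lemma log_six_le_two : Real.log 6 ≤ 2 := by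
  rw [Real.log_le_iff_le_exp (by norm_num)]
  have he : Real.exp 2 = Real.exp 1 * Real.exp 1 := by
    rw [← Real.exp_add]; norm_num
  nlinarith [Real.exp_one_gt_d9]

end Chunk7

end Stmt6A

set_option maxHeartbeats 2000000 in
/-- for every `n ≥ 1`, every `f` with `‖f‖₂ = 1` and every `ε ∈ (0,1)`,
`VAR(f,ε) ≤ 7 · W(f)^{ε/4}` where `W(f) = (1/4) ∑ᵢ ‖Dᵢ f‖₁²`. -/
theorem stmt6 (n : ℕ) (hn : 1 ≤ n) (f : (Fin n → Bool) → ℝ)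
    (hf : (cubeE n fun x => f x ^ 2) ^ ((1 : ℝ) / 2) = 1)
    (ε : ℝ) (hε : ε ∈ Set.Ioo (0 : ℝ) 1) :
    cubeNS n f ε ≤
      7 * ((1 / 4) * ∑ i : Fin n, (cubeE n fun x => |Dop n i f x|) ^ 2) ^ (ε / 4) := by
  obtain ⟨hε0, hε1⟩ := hε
  set W := (1 / 4) * ∑ i : Fin n, (cubeE n fun x => |Dop n i f x|) ^ 2 with hWdef
  have hWnn : 0 ≤ W := mul_nonneg (by norm_num) (Finset.sum_nonneg fun i _ => sq_nonneg _)
  have hWε : 0 ≤ W ^ (ε/4) := Real.rpow_nonneg hWnn _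
  have hρ0 : (0:ℝ) < 1 - ε := by linarith
  have hρ1 : (1:ℝ) - ε < 1 := by linarith
  have hsum1 : ∑ s : Fin n → Bool, (Stmt6A.fc f s)^2 = 1 := Stmt6A.sum_fc_sq_one f hf
  have hNS : cubeNS n f ε
      = ∑ s ∈ Finset.univ.erase (fun _ : Fin n => false),
          (1-ε) ^ Stmt6A.wt s * (Stmt6A.fc f s)^2 := Stmt6A.cubeNS_eq f ε
  have hann : ∀ s : Fin n → Bool, 0 ≤ (Stmt6A.fc f s)^2 := fun s => sq_nonneg _
  have hAle : ∑ s ∈ Finset.univ.erase (fun _ : Fin n => false), (Stmt6A.fc f s)^2 ≤ 1 := by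
    rw [← hsum1]
    exact Finset.sum_le_sum_of_subset_of_nonneg (Finset.subset_univ _) fun s _ _ => hann s
  by_cases hcase : 1 ≤ 7 * W ^ (ε/4)
  · have h1 : cubeNS n f ε ≤ 1 := by
      rw [hNS]
      refine le_trans (Finset.sum_le_sum fun s _ => ?_) hAle
      have hp : (1-ε) ^ Stmt6A.wt s ≤ 1 := pow_le_one₀ hρ0.le hρ1.le
      nlinarith [hann s, pow_nonneg hρ0.le (Stmt6A.wt s)]
    linarith
  · push_neg at hcase
    have hW1 : W < 1 := by
      by_contra hW
      push_neg at hW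
      have := Real.one_le_rpow hW (by positivity : (0:ℝ) ≤ ε/4)
      linarith
    have hlogneg : Real.log (1-ε) < 0 := Real.log_neg hρ0 hρ1
    set L := - Real.log (1-ε) with hLdef
    have hL0 : 0 < L := by rw [hLdef]; linarith
    have hLε : ε ≤ L := by
      have h := Real.log_le_sub_one_of_pos hρ0
      rw [hLdef]; linarith
    set r := max 1 (Real.log 6 / L) with hrdef
    have hr1 : 1 ≤ r := le_max_left _ _
    have hr0 : 0 < r := lt_of_lt_of_le one_pos hr1
    set τ := (1-ε) ^ (r:ℝ) with hτdef
    have hτ0 : 0 < τ := Real.rpow_pos_of_pos hρ0 r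
    have hrL : Real.log 6 ≤ r * L := by
      have h1 : Real.log 6 / L ≤ r := le_max_right _ _
      calc Real.log 6 = (Real.log 6 / L) * L := by field_simp
        _ ≤ r * L := mul_le_mul_of_nonneg_right h1 hL0.le
    have hτ6 : τ ≤ 1/6 := by
      have hτe : τ = Real.exp (-(r * L)) := by
        rw [hτdef, Real.rpow_def_of_pos hρ0, hLdef]
        ring_nf
      rw [hτe, show (1:ℝ)/6 = Real.exp (- Real.log 6) by
        rw [Real.exp_neg, Real.exp_log (by norm_num : (0:ℝ) < 6), one_div]]
      exact Real.exp_le_exp.mpr (by linarith)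
    set E0 : Finset (Fin n → Bool) := Finset.univ.erase (fun _ : Fin n => false) with hE0
    set A := ∑ s ∈ E0, (Stmt6A.fc f s)^2 with hAdef
    have hAnn : 0 ≤ A := Finset.sum_nonneg fun s _ => hann s
    set Vτ := ∑ s ∈ E0, τ ^ Stmt6A.wt s * (Stmt6A.fc f s)^2 with hVdef
    have hVnn : 0 ≤ Vτ :=
      Finset.sum_nonneg fun s _ => mul_nonneg (pow_nonneg hτ0.le _) (hann s)
    have hVW : Vτ ≤ Real.sqrt W := by
      rw [hVdef, hWdef]
      exact Stmt6A.Vsum_bound f hτ0.le hτ6 hsum1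
    by_cases hA0 : A = 0
    · have hzero : cubeNS n f ε = 0 := by
        rw [hNS]
        refine Finset.sum_eq_zero fun s hs => ?_
        have hz : ∀ s ∈ E0, (Stmt6A.fc f s)^2 = 0 :=
          (Finset.sum_eq_zero_iff_of_nonneg fun s _ => hann s).mp (by rw [← hAdef]; exact hA0)
        rw [hz s hs, mul_zero]
      rw [hzero]
      linarith
    · have hA0' : 0 < A := lt_of_le_of_ne hAnn (Ne.symm hA0)
      have hA1 : A ≤ 1 := hAle
      have hpow : ∀ s : Fin n → Bool,
          ((1-ε) ^ Stmt6A.wt s : ℝ) ^ (r:ℝ) = τ ^ Stmt6A.wt s := by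
        intro s
        rw [← Real.rpow_natCast (1-ε) (Stmt6A.wt s), ← Real.rpow_natCast τ (Stmt6A.wt s),
          hτdef, ← Real.rpow_mul hρ0.le, ← Real.rpow_mul hρ0.le,
          mul_comm ((Stmt6A.wt s : ℕ):ℝ) r]
      have hwsum : ∑ s ∈ E0, (Stmt6A.fc f s)^2 / A = 1 := by
        rw [← Finset.sum_div, ← hAdef, div_self hA0]
      have jensen := Real.rpow_arith_mean_le_arith_mean_rpow E0
        (fun s => (Stmt6A.fc f s)^2 / A) (fun s => (1-ε) ^ Stmt6A.wt s)
        (fun s _ => div_nonneg (hann s) hAnn) hwsum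
        (fun s _ => pow_nonneg hρ0.le _) hr1
      have hlhs : ∑ s ∈ E0, (Stmt6A.fc f s)^2 / A * (1-ε) ^ Stmt6A.wt s
          = (∑ s ∈ E0, (1-ε) ^ Stmt6A.wt s * (Stmt6A.fc f s)^2) / A := by
        rw [Finset.sum_div]
        exact Finset.sum_congr rfl fun s _ => by ring
      have hrhs : ∑ s ∈ E0, (Stmt6A.fc f s)^2 / A * ((1-ε) ^ Stmt6A.wt s) ^ (r:ℝ)
          = Vτ / A := by
        rw [hVdef, Finset.sum_div]
        exact Finset.sum_congr rfl fun s _ => by rw [hpow s]; ring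
      rw [hlhs, hrhs] at jensen
      set NS' := ∑ s ∈ E0, (1-ε) ^ Stmt6A.wt s * (Stmt6A.fc f s)^2 with hNSdef
      have hNSnn : 0 ≤ NS' :=
        Finset.sum_nonneg fun s _ => mul_nonneg (pow_nonneg hρ0.le _) (hann s)
      have hXnn : 0 ≤ NS' / A := div_nonneg hNSnn hAnn
      have hstep : NS' / A ≤ (Vτ / A) ^ ((1:ℝ)/r) := by
        have h1 : ((NS'/A) ^ (r:ℝ)) ^ ((1:ℝ)/r) ≤ (Vτ/A) ^ ((1:ℝ)/r) :=
          Real.rpow_le_rpow (Real.rpow_nonneg hXnn _) jensen (by positivity)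
        rw [← Real.rpow_mul hXnn, mul_one_div, div_self hr0.ne', Real.rpow_one] at h1
        exact h1
      have hkey : NS' ≤ Vτ ^ ((1:ℝ)/r) := by
        have hdiv : (Vτ / A) ^ ((1:ℝ)/r) = Vτ ^ ((1:ℝ)/r) / A ^ ((1:ℝ)/r) :=
          Real.div_rpow hVnn hAnn _
        have hA1r0 : 0 < A ^ ((1:ℝ)/r) := Real.rpow_pos_of_pos hA0' _
        have h2 : NS' = (NS'/A) * A := by field_simp
        rw [h2]
        calc (NS'/A) * A ≤ ((Vτ/A) ^ ((1:ℝ)/r)) * A :=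
            mul_le_mul_of_nonneg_right hstep hAnn
          _ = (Vτ ^ ((1:ℝ)/r) / A ^ ((1:ℝ)/r)) * A := by rw [hdiv]
          _ = Vτ ^ ((1:ℝ)/r) * (A / A ^ ((1:ℝ)/r)) := by ring
          _ ≤ Vτ ^ ((1:ℝ)/r) * 1 := by
              refine mul_le_mul_of_nonneg_left ?_ (Real.rpow_nonneg hVnn _)
              rw [div_le_one hA1r0]
              calc A = A ^ (1:ℝ) := (Real.rpow_one A).symm
                _ ≤ A ^ ((1:ℝ)/r) := Real.rpow_le_rpow_of_exponent_ge hA0' hA1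
                    ((div_le_one hr0).mpr hr1)
          _ = Vτ ^ ((1:ℝ)/r) := mul_one _
      have h3 : Vτ ^ ((1:ℝ)/r) ≤ (W ^ ((1:ℝ)/2)) ^ ((1:ℝ)/r) := by
        refine Real.rpow_le_rpow hVnn ?_ (by positivity)
        rw [← Real.sqrt_eq_rpow]
        exact hVW
      have h4 : (W ^ ((1:ℝ)/2)) ^ ((1:ℝ)/r) = W ^ ((1:ℝ)/(2*r)) := by
        rw [← Real.rpow_mul hWnn, show (1:ℝ)/2 * (1/r) = 1/(2*r) by
          rw [div_mul_div_comm, one_mul]]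
      have hrle : r ≤ 2/ε := by
        rw [hrdef]
        refine max_le ?_ ?_
        · rw [le_div_iff₀ hε0]; linarith
        · rw [div_le_div_iff₀ hL0 hε0]
          calc Real.log 6 * ε ≤ 2 * ε := by nlinarith [Stmt6A.log_six_le_two]
            _ ≤ 2 * L := by nlinarith
      have hexp : ε/4 ≤ 1/(2*r) := by
        have h2r : 0 < 2*r := by linarith
        rw [div_le_div_iff₀ (by norm_num : (0:ℝ) < 4) h2r]
        have hm1 : ε*r ≤ ε*(2/ε) := mul_le_mul_of_nonneg_left hrle hε0.le
        have hm2 : ε*(2/ε) = 2 := by field_simp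
        nlinarith
      have h5 : W ^ ((1:ℝ)/(2*r)) ≤ W ^ (ε/4) := by
        rcases eq_or_lt_of_le hWnn with hW0 | hW0pos
        · rw [← hW0, Real.zero_rpow (by positivity : (0:ℝ) < 1/(2*r)).ne',
            Real.zero_rpow (by positivity : (0:ℝ) < ε/4).ne']
        · exact Real.rpow_le_rpow_of_exponent_ge hW0pos hW1.le hexp
      rw [hNS]
      calc NS' ≤ Vτ ^ ((1:ℝ)/r) := hkey
        _ ≤ (W ^ ((1:ℝ)/2)) ^ ((1:ℝ)/r) := h3
        _ = W ^ ((1:ℝ)/(2*r)) := h4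
        _ ≤ W ^ (ε/4) := h5
        _ ≤ 7 * W ^ (ε/4) := by linarith
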